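/- Let 0 < α < 1, t₀ < t, let S : [t₀,t] → (0,∞) be continuously differentiable, and let g : (0,∞) → (0,∞) be continuous and monotone increasing. Define w(y) = S(y) − S(t) − ∫_{S(t)}^{S(y)} g(S(t))/g(X) dX and Ψ(t) = (1/Γ(1−α)) ∫_{t₀}^{t} S′(y)(t−y)^{−α} (1 − g(S(t))/g(S(y))) dy. Then Ψ(t) = −((t−t₀)^{−α}/Γ(1−α)) w(t₀) − ∫_{t₀}^{t} (α (t−y)^{−(α+1)}/Γ(1−α)) w(y) dy. -/

import Mathlib

open Set MeasureTheory Filter Topology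


/- STATEMENT 2: Integration-by-parts representation of
Ψ(t) = (1/Γ(1−α)) ∫_{t₀}^{t} S′(y)(t−y)^{−α} (1 − g(S(t))/g(S(y))) dy
in terms of w(y) = S(y) − S(t) − ∫_{S(t)}^{S(y)} g(S(t))/g(X) dX:
Ψ(t) = −((t−t₀)^{−α}/Γ(1−α)) w(t₀) − ∫_{t₀}^{t} (α (t−y)^{−(α+1)}/Γ(1−α)) w(y) dy. -/
theorem stmt_2 (α t₀ t : ℝ) (hα0 : 0 < α) (hα1 : α < 1) (ht : t₀ < t)
    (S g : ℝ → ℝ)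
    (hS : ContDiffOn ℝ 1 S (Set.Icc t₀ t))
    (hSpos : ∀ y ∈ Set.Icc t₀ t, 0 < S y)
    (hg_cont : ContinuousOn g (Set.Ioi 0))
    (hg_pos : ∀ x : ℝ, 0 < x → 0 < g x)
    (hg_mono : StrictMonoOn g (Set.Ioi 0)) :
    (1 / Real.Gamma (1 - α)) *
        ∫ y in t₀..t, deriv S y * (t - y) ^ (-α) * (1 - g (S t) / g (S y))
      = -((t - t₀) ^ (-α) / Real.Gamma (1 - α)) *
            (S t₀ - S t - ∫ X in S t..S t₀, g (S t) / g X)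
        - ∫ y in t₀..t, (α * (t - y) ^ (-(α + 1)) / Real.Gamma (1 - α)) *
            (S y - S t - ∫ X in S t..S y, g (S t) / g X) := by
  have hΓ : Real.Gamma (1 - α) ≠ 0 := (Real.Gamma_pos_of_pos (by linarith)).ne'
  have htI : t ∈ Set.Icc t₀ t := Set.right_mem_Icc.2 ht.le
  have hSt : 0 < S t := hSpos t htI
  -- the ratio function
  have hgS : ContinuousOn (fun X : ℝ => g (S t) / g X) (Set.Ioi 0) :=
    continuousOn_const.div hg_cont fun x hx => (hg_pos x hx).ne'
  set G : ℝ → ℝ := fun u => ∫ X in S t..u, g (S t) / g X with hG_def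
  have hGderiv : ∀ u : ℝ, 0 < u → HasDerivAt G (g (S t) / g u) u := by
    intro u hu
    have hsub : Set.uIcc (S t) u ⊆ Set.Ioi 0 := fun x hx =>
      lt_of_lt_of_le (lt_min hSt hu) hx.1
    exact intervalIntegral.integral_hasDerivAt_right
      ((hgS.mono hsub).intervalIntegrable)
      (hgS.stronglyMeasurableAtFilter isOpen_Ioi u hu)
      (hgS.continuousAt (isOpen_Ioi.mem_nhds hu))
  -- derivative of S within Icc
  set S' : ℝ → ℝ := fun y => derivWithin S (Set.Icc t₀ t) y with hS'_def
  have hS'cont : ContinuousOn S' (Set.Icc t₀ t) :=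
    hS.continuousOn_derivWithin (uniqueDiffOn_Icc ht) le_rfl
  have hSdw : ∀ y ∈ Set.Icc t₀ t, HasDerivWithinAt S (S' y) (Set.Icc t₀ t) y := fun y hy =>
    (hS.differentiableOn one_ne_zero y hy).hasDerivWithinAt
  have hSda : ∀ y ∈ Set.Ioo t₀ t, HasDerivAt S (S' y) y := fun y hy =>
    (hSdw y (Set.Ioo_subset_Icc_self hy)).hasDerivAt (Icc_mem_nhds hy.1 hy.2)
  have hScont : ContinuousOn S (Set.Icc t₀ t) := hS.continuousOn
  set w : ℝ → ℝ := fun y => S y - S t - G (S y) with hw_def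
  set w' : ℝ → ℝ := fun y => S' y * (1 - g (S t) / g (S y)) with hw'_def
  have hw_within : ∀ y ∈ Set.Icc t₀ t, HasDerivWithinAt w (w' y) (Set.Icc t₀ t) y := by
    intro y hy
    have h1 : HasDerivWithinAt (fun y => G (S y)) (g (S t) / g (S y) * S' y)
        (Set.Icc t₀ t) y :=
      (hGderiv (S y) (hSpos y hy)).comp_hasDerivWithinAt y (hSdw y hy)
    have h2 := ((hSdw y hy).sub_const (S t)).sub h1
    refine h2.congr_deriv ?_
    simp only [hw'_def]; ring
  have hw_at : ∀ y ∈ Set.Ioo t₀ t, HasDerivAt w (w' y) y := fun y hy =>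
    (hw_within y (Set.Ioo_subset_Icc_self hy)).hasDerivAt (Icc_mem_nhds hy.1 hy.2)
  have hgScont : ContinuousOn (fun y => g (S t) / g (S y)) (Set.Icc t₀ t) :=
    hgS.comp hScont fun y hy => hSpos y hy
  have hw'cont : ContinuousOn w' (Set.Icc t₀ t) :=
    hS'cont.mul (continuousOn_const.sub hgScont)
  have hwcont : ContinuousOn w (Set.Icc t₀ t) := by
    apply (hScont.sub continuousOn_const).sub
    intro y hy
    exact ((hGderiv (S y) (hSpos y hy)).differentiableAt.continuousAt).comp_continuousWithinAt
      (hScont y hy)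
  have hwt : w t = 0 := by simp [hw_def, hG_def]
  -- bound on w'
  obtain ⟨C, hC⟩ := isCompact_Icc.exists_bound_of_continuousOn hw'cont
  have hC0 : 0 ≤ C := le_trans (norm_nonneg _) (hC t htI)
  have hwbound : ∀ y ∈ Set.Icc t₀ t, |w y| ≤ C * (t - y) := by
    intro y hy
    have := Convex.norm_image_sub_le_of_norm_hasDerivWithin_le hw_within hC
      (convex_Icc t₀ t) htI hy
    rw [hwt, sub_zero] at this
    simpa [Real.norm_eq_abs, abs_of_nonpos (by linarith [hy.2] : y - t ≤ 0)] using this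
  -- integrability of (t-y)^r
  have hrpow : ∀ r : ℝ, -1 < r →
      IntervalIntegrable (fun y : ℝ => (t - y) ^ r) volume t₀ t := by
    intro r hr
    have h := (intervalIntegral.intervalIntegrable_rpow' (a := t - t₀) (b := 0) hr).comp_sub_left t
    have e1 : t - (t - t₀) = t₀ := by ring
    have e2 : t - 0 = t := by ring
    rwa [e1, e2] at h
  have hIoo_meas : MeasurableSet (Set.Ioo t₀ t) := measurableSet_Ioo
  -- generic domination lemma for integrability on t₀..t
  have hdom : ∀ (D : ℝ) (f : ℝ → ℝ), ContinuousOn f (Set.Ioo t₀ t) →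
      (∀ y ∈ Set.Ioo t₀ t, |f y| ≤ D * (t - y) ^ (-α)) →
      IntervalIntegrable f volume t₀ t := by
    intro D f hfc hfb
    rw [intervalIntegrable_iff_integrableOn_Ioo_of_le ht.le]
    have hgint : IntegrableOn (fun y : ℝ => D * (t - y) ^ (-α))
        (Set.Ioo t₀ t) volume := by
      have := ((hrpow (-α) (by linarith)).const_mul D)
      rw [intervalIntegrable_iff_integrableOn_Ioo_of_le ht.le] at this
      exact this
    refine hgint.mono' (hfc.aestronglyMeasurable hIoo_meas) ?_
    rw [ae_restrict_iff' hIoo_meas]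
    filter_upwards with y hy
    simpa [Real.norm_eq_abs] using hfb y hy
  have hφcont : ∀ r : ℝ, ContinuousOn (fun y : ℝ => (t - y) ^ r) (Set.Ioo t₀ t) := by
    intro r
    exact (continuousOn_const.sub continuousOn_id).rpow_const
      fun y hy => Or.inl (sub_pos.2 hy.2).ne'
  -- integrability of the two terms
  have hInt1 : IntervalIntegrable (fun y => w' y * (t - y) ^ (-α)) volume t₀ t := by
    apply hdom C
    · exact (hw'cont.mono Set.Ioo_subset_Icc_self).mul (hφcont (-α))
    · intro y hy
      have hpos : (0:ℝ) < t - y := sub_pos.2 hy.2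
      have h1 : |w' y| ≤ C := by
        simpa [Real.norm_eq_abs] using hC y (Set.Ioo_subset_Icc_self hy)
      have h2 : (0:ℝ) ≤ (t - y) ^ (-α) := Real.rpow_nonneg hpos.le _
      calc |w' y * (t - y) ^ (-α)| = |w' y| * (t - y) ^ (-α) := by
            rw [abs_mul, abs_of_nonneg h2]
        _ ≤ C * (t - y) ^ (-α) := mul_le_mul_of_nonneg_right h1 h2
  have hInt2 : IntervalIntegrable (fun y => α * (t - y) ^ (-(α + 1)) * w y) volume t₀ t := by
    apply hdom (α * C)
    · exact (continuousOn_const.mul (hφcont (-(α+1)))).mul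
        (hwcont.mono Set.Ioo_subset_Icc_self)
    · intro y hy
      have hpos : (0:ℝ) < t - y := sub_pos.2 hy.2
      have h2 : (0:ℝ) ≤ (t - y) ^ (-(α+1)) := Real.rpow_nonneg hpos.le _
      have hwb := hwbound y (Set.Ioo_subset_Icc_self hy)
      have e : (t - y) ^ (-α) = (t - y) ^ (-(α + 1)) * (t - y) := by
        rw [show (-α) = (-(α+1)) + 1 by ring, Real.rpow_add hpos, Real.rpow_one]
      calc |α * (t - y) ^ (-(α + 1)) * w y|
          = α * (t - y) ^ (-(α + 1)) * |w y| := by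
            rw [abs_mul, abs_of_nonneg (by positivity)]
        _ ≤ α * (t - y) ^ (-(α + 1)) * (C * (t - y)) :=
            mul_le_mul_of_nonneg_left hwb (by positivity)
        _ = α * C * (t - y) ^ (-α) := by rw [e]; ring
  -- derivative of the rpow factor
  have hφd : ∀ y ∈ Set.Ioo t₀ t,
      HasDerivAt (fun y : ℝ => (t - y) ^ (-α)) (α * (t - y) ^ (-(α + 1))) y := by
    intro y hy
    have h1 : HasDerivAt (fun x : ℝ => t - x) (-1) y := (hasDerivAt_id y).const_sub t
    have h2 : HasDerivAt (fun x : ℝ => x ^ (-α)) (-α * (t - y) ^ (-α - 1)) (t - y) :=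
      Real.hasDerivAt_rpow_const (Or.inl (sub_pos.2 hy.2).ne')
    have h3 := h2.comp y h1
    refine h3.congr_deriv ?_
    rw [show (-(α + 1)) = -α - 1 by ring]; ring
  have hFd : ∀ y ∈ Set.Ioo t₀ t,
      HasDerivAt (fun y => w y * (t - y) ^ (-α))
        (w' y * (t - y) ^ (-α) + α * (t - y) ^ (-(α + 1)) * w y) y := by
    intro y hy
    have := (hw_at y hy).mul (hφd y hy)
    refine this.congr_deriv ?_; ring
  have hsub_b : ∀ b ∈ Set.Ioo t₀ t, Set.uIcc t₀ b ⊆ Set.uIcc t₀ t := fun b hb =>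
    Set.uIcc_subset_uIcc Set.left_mem_uIcc
      (by rw [Set.uIcc_of_le ht.le]; exact Set.Ioo_subset_Icc_self hb)
  -- FTC on [t₀, b]
  have hsplit : ∀ b ∈ Set.Ioo t₀ t,
      (∫ y in t₀..b, w' y * (t - y) ^ (-α))
        = (w b * (t - b) ^ (-α) - w t₀ * (t - t₀) ^ (-α))
          - ∫ y in t₀..b, α * (t - y) ^ (-(α + 1)) * w y := by
    intro b hb
    have hFcont : ContinuousOn (fun y => w y * (t - y) ^ (-α)) (Set.Icc t₀ b) := by
      refine (hwcont.mono (Set.Icc_subset_Icc_right hb.2.le)).mul ?_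
      exact (continuousOn_const.sub continuousOn_id).rpow_const
        fun y hy => Or.inl (sub_pos.2 (lt_of_le_of_lt hy.2 hb.2)).ne'
    have hftc := intervalIntegral.integral_eq_sub_of_hasDeriv_right_of_le hb.1.le hFcont
      (fun x hx => (hFd x ⟨hx.1, hx.2.trans hb.2⟩).hasDerivWithinAt)
      ((hInt1.add hInt2).mono_set (hsub_b b hb))
    rw [intervalIntegral.integral_add (hInt1.mono_set (hsub_b b hb))
      (hInt2.mono_set (hsub_b b hb))] at hftc
    linarith [hftc]
  -- limits as b → t within Ioo t₀ t
  haveI hNB : (𝓝[Set.Ioo t₀ t] t).NeBot := by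
    apply mem_closure_iff_nhdsWithin_neBot.1
    rw [closure_Ioo ht.ne]; exact htI
  have hprim : ∀ (f : ℝ → ℝ), IntervalIntegrable f volume t₀ t →
      Tendsto (fun b => ∫ y in t₀..b, f y) (𝓝[Set.Ioo t₀ t] t)
        (𝓝 (∫ y in t₀..t, f y)) := by
    intro f hf
    have hc := intervalIntegral.continuousWithinAt_primitive (μ := volume)
      (a := t₀) (b₀ := t) (b₁ := t₀) (b₂ := t) (f := f) (measure_singleton t) ?_
    · exact hc.tendsto.mono_left (nhdsWithin_mono t Set.Ioo_subset_Icc_self)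
    · rwa [min_self, max_eq_right ht.le]
  have lim1 := hprim _ hInt1
  have lim2 := hprim _ hInt2
  have lim3 : Tendsto (fun b => w b * (t - b) ^ (-α)) (𝓝[Set.Ioo t₀ t] t) (𝓝 0) := by
    apply squeeze_zero_norm' (a := fun b => C * (t - b) ^ (1 - α))
    · filter_upwards [self_mem_nhdsWithin] with b hb
      have hpos : (0:ℝ) < t - b := sub_pos.2 hb.2
      have h2 : (0:ℝ) ≤ (t - b) ^ (-α) := Real.rpow_nonneg hpos.le _
      have e : (t - b) ^ (1 - α) = (t - b) * (t - b) ^ (-α) := by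
        rw [show (1 - α) = 1 + (-α) by ring, Real.rpow_add hpos, Real.rpow_one]
      calc ‖w b * (t - b) ^ (-α)‖ = |w b| * (t - b) ^ (-α) := by
            rw [Real.norm_eq_abs, abs_mul, abs_of_nonneg h2]
        _ ≤ (C * (t - b)) * (t - b) ^ (-α) :=
            mul_le_mul_of_nonneg_right (hwbound b (Set.Ioo_subset_Icc_self hb)) h2
        _ = C * (t - b) ^ (1 - α) := by rw [e]; ring
    · have h0 : Tendsto (fun b : ℝ => t - b) (𝓝[Set.Ioo t₀ t] t) (𝓝 0) := by
        have hcont0 : Continuous fun b : ℝ => t - b := continuous_const.sub continuous_id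
        have := hcont0.tendsto t
        rw [sub_self] at this
        exact this.mono_left nhdsWithin_le_nhds
      have hc : ContinuousAt (fun x : ℝ => x ^ (1 - α)) 0 :=
        Real.continuousAt_rpow_const 0 (1 - α) (Or.inr (by linarith))
      have h1 := hc.tendsto.comp h0
      rw [Real.zero_rpow (by linarith : (1:ℝ) - α ≠ 0)] at h1
      simpa using h1.const_mul C
  have limR : Tendsto (fun b =>
      (w b * (t - b) ^ (-α) - w t₀ * (t - t₀) ^ (-α))
        - ∫ y in t₀..b, α * (t - y) ^ (-(α + 1)) * w y) (𝓝[Set.Ioo t₀ t] t)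
      (𝓝 ((0 - w t₀ * (t - t₀) ^ (-α)) - ∫ y in t₀..t, α * (t - y) ^ (-(α + 1)) * w y)) :=
    (lim3.sub_const _).sub lim2
  have key0 : (∫ y in t₀..t, w' y * (t - y) ^ (-α))
      = (0 - w t₀ * (t - t₀) ^ (-α)) - ∫ y in t₀..t, α * (t - y) ^ (-(α + 1)) * w y := by
    refine tendsto_nhds_unique lim1 (limR.congr' ?_)
    filter_upwards [self_mem_nhdsWithin] with b hb
    exact (hsplit b hb).symm
  -- rewrite the LHS integrand
  have hcongr : (∫ y in t₀..t, deriv S y * (t - y) ^ (-α) * (1 - g (S t) / g (S y)))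
      = ∫ y in t₀..t, w' y * (t - y) ^ (-α) := by
    apply intervalIntegral.integral_congr_ae
    filter_upwards [compl_mem_ae_iff.2 (measure_singleton t)] with x hx hxI
    rw [Set.uIoc_of_le ht.le] at hxI
    have hx' : x ∈ Set.Ioo t₀ t := ⟨hxI.1, lt_of_le_of_ne hxI.2 hx⟩
    rw [(hSda x hx').deriv]
    simp only [hw'_def]; ring
  -- rewrite the RHS integral
  have hRHS : (∫ y in t₀..t, (α * (t - y) ^ (-(α + 1)) / Real.Gamma (1 - α)) *
        (S y - S t - ∫ X in S t..S y, g (S t) / g X))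
      = (1 / Real.Gamma (1 - α)) * ∫ y in t₀..t, α * (t - y) ^ (-(α + 1)) * w y := by
    rw [← intervalIntegral.integral_const_mul]
    apply intervalIntegral.integral_congr
    intro x hx
    simp only [hw_def, hG_def]
    ring
  have hW₀ : S t₀ - S t - (∫ X in S t..S t₀, g (S t) / g X) = w t₀ := by
    simp only [hw_def, hG_def]
  rw [hcongr, key0, hRHS, ← hW₀]
  field_simp
  ring
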